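/- Let a, b ∈ ℂ with 1 − conj(a)·b ≠ 0, and set N₃ = L₀(b)/(1+|b|²) − L₃(a)/(1+|a|²) ∈ ℝ⁴. Then the 0-th component of N₃ is zero, ⟪N₃,N₃⟫ = 4·|1 − conj(a)·b|²/((1+|a|²)(1+|b|²)) > 0, and the last (index 3) component of the unit vector ν = N₃/√⟪N₃,N₃⟫ equals (1 − |ab|²)/( |1 − conj(a)·b| · √(1+|a|²) · √(1+|b|²) ). -/

import Mathlib

open ComplexConjugate

/-- The Minkowski bilinear form on `ℝ⁴`: `⟪x,y⟫ = -x₀y₀ + x₁y₁ + x₂y₂ + x₃y₃`. -/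
noncomputable def mink (x y : Fin 4 → ℝ) : ℝ :=
  -(x 0 * y 0) + x 1 * y 1 + x 2 * y 2 + x 3 * y 3

/-- The lightlike vector `L₀(b) = (1+|b|², b+conj b, −i(b−conj b), 1−|b|²)` of `ℝ⁴`. -/
noncomputable def L0r (b : ℂ) : Fin 4 → ℝ :=
  ![1 + ‖b‖ ^ 2, (b + conj b).re, (-Complex.I * (b - conj b)).re,
    1 - ‖b‖ ^ 2]

/-- The lightlike vector `L₃(a) = (1+|a|², a+conj a, −i(a−conj a), −1+|a|²)` of `ℝ⁴`. -/
noncomputable def L3r (a : ℂ) : Fin 4 → ℝ :=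
  ![1 + ‖a‖ ^ 2, (a + conj a).re, (-Complex.I * (a - conj a)).re,
    -1 + ‖a‖ ^ 2]

theorem stmt9 (a b : ℂ) (h : 1 - conj a * b ≠ 0)
    (N : Fin 4 → ℝ)
    (hN : N = (1 / (1 + ‖b‖ ^ 2)) • L0r b - (1 / (1 + ‖a‖ ^ 2)) • L3r a) :
    N 0 = 0 ∧
    mink N N = 4 * ‖1 - conj a * b‖ ^ 2
        / ((1 + ‖a‖ ^ 2) * (1 + ‖b‖ ^ 2)) ∧
    0 < mink N N ∧
    N 3 / Real.sqrt (mink N N)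
      = (1 - ‖a * b‖ ^ 2)
        / (‖1 - conj a * b‖ * Real.sqrt (1 + ‖a‖ ^ 2)
            * Real.sqrt (1 + ‖b‖ ^ 2)) := by
  have hA : (0:ℝ) < 1 + ‖a‖ ^ 2 := by positivity
  have hB : (0:ℝ) < 1 + ‖b‖ ^ 2 := by positivity
  have hC : 0 < ‖1 - conj a * b‖ := norm_pos_iff.mpr h
  have habsa : ‖a‖ ^ 2 = a.re ^ 2 + a.im ^ 2 := by
    rw [Complex.sq_norm, Complex.normSq_apply]; ring
  have habsb : ‖b‖ ^ 2 = b.re ^ 2 + b.im ^ 2 := by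
    rw [Complex.sq_norm, Complex.normSq_apply]; ring
  have habsC : ‖1 - conj a * b‖ ^ 2
      = (1 - (a.re * b.re + a.im * b.im)) ^ 2 + (a.im * b.re - a.re * b.im) ^ 2 := by
    rw [Complex.sq_norm, Complex.normSq_apply]
    simp [Complex.sub_re, Complex.sub_im, Complex.mul_re, Complex.mul_im]
    ring
  have hA' : (0:ℝ) < 1 + (a.re ^ 2 + a.im ^ 2) := habsa ▸ hA
  have hB' : (0:ℝ) < 1 + (b.re ^ 2 + b.im ^ 2) := habsb ▸ hB
  have h0 : N 0 = 0 := by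
    simp only [hN, Pi.sub_apply, Pi.smul_apply, L0r, L3r, smul_eq_mul, Matrix.cons_val]
    norm_num
    rw [inv_mul_cancel₀ hB.ne', inv_mul_cancel₀ hA.ne']
    ring
  have h3 : N 3 = 2 * (1 - ‖a * b‖ ^ 2)
      / ((1 + ‖a‖ ^ 2) * (1 + ‖b‖ ^ 2)) := by
    simp only [hN, Pi.sub_apply, Pi.smul_apply, L0r, L3r, smul_eq_mul, Matrix.cons_val]
    norm_num [norm_mul, mul_pow]
    field_simp
    ring
  have hm : mink N N = 4 * ‖1 - conj a * b‖ ^ 2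
      / ((1 + ‖a‖ ^ 2) * (1 + ‖b‖ ^ 2)) := by
    simp only [mink, hN, Pi.sub_apply, Pi.smul_apply, L0r, L3r, smul_eq_mul, Matrix.cons_val]
    norm_num
    simp only [habsa, habsb, habsC, Complex.add_re, Complex.conj_re, Complex.mul_re,
      Complex.mul_im, Complex.sub_re, Complex.sub_im, Complex.conj_im, Complex.neg_re,
      Complex.neg_im, Complex.I_re, Complex.I_im]
    field_simp
    ring
  have hmpos : 0 < mink N N := by
    rw [hm]; positivity
  refine ⟨h0, hm, hmpos, ?_⟩
  have hsq : Real.sqrt (mink N N)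
      = 2 * ‖1 - conj a * b‖
        / (Real.sqrt (1 + ‖a‖ ^ 2) * Real.sqrt (1 + ‖b‖ ^ 2)) := by
    rw [hm, Real.sqrt_div' _ , Real.sqrt_mul hA.le]
    · congr 1
      rw [show (4:ℝ) * ‖1 - conj a * b‖ ^ 2
          = (2 * ‖1 - conj a * b‖) ^ 2 by ring,
        Real.sqrt_sq (by positivity)]
    all_goals positivity
  rw [h3, hsq]
  have hsa : Real.sqrt (1 + ‖a‖ ^ 2) > 0 := Real.sqrt_pos.2 hA
  have hsb : Real.sqrt (1 + ‖b‖ ^ 2) > 0 := Real.sqrt_pos.2 hB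
  have ha2 : Real.sqrt (1 + ‖a‖ ^ 2) ^ 2 = 1 + ‖a‖ ^ 2 :=
    Real.sq_sqrt hA.le
  have hb2 : Real.sqrt (1 + ‖b‖ ^ 2) ^ 2 = 1 + ‖b‖ ^ 2 :=
    Real.sq_sqrt hB.le
  field_simp
  rw [ha2, hb2]
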